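/- Let X ∈ ℝ^{d×n}, and for i = 1,…,L let σᵢ : ℝ^{dᵢ×n} → ℝ^{dᵢ×n} be ρᵢ-Lipschitz with respect to the Frobenius norm with σᵢ(0)=0, and let aᵢ, sᵢ > 0, with d₀ = d. Define the hypothesis family H = { σ_L(A_L σ_{L−1}(A_{L−1} ⋯ σ₁(A₁ X) ⋯)) : Aᵢ ∈ ℝ^{dᵢ×d_{i−1}}, ‖Aᵢ‖_F ≤ aᵢ and ‖Aᵢ‖_σ ≤ sᵢ for all i } ⊆ ℝ^{d_L×n}, and let R_A = (2∏_{i=1}^{L} ρᵢ sᵢ)·(Σ_{i=1}^{L} dᵢ² d_{i−1}² aᵢ / sᵢ)·L². Then for every ε > 0 there exists a finite set U of matrices in ℝ^{d_L×n} with ln|U| ≤ (‖X‖_F · R_A / ε)^{1/2} such that every element of H is within Frobenius distance ε of some element of U. -/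

import Mathlib

noncomputable def frobNorm {α β : Type*} [Fintype α] [Fintype β] (M : Matrix α β ℝ) : ℝ :=
  Real.sqrt (∑ i, ∑ j, (M i j) ^ 2)

noncomputable def specNorm {α β : Type*} [Fintype α] [Fintype β] [DecidableEq β]
    (M : Matrix α β ℝ) : ℝ :=
  ‖LinearMap.toContinuousLinearMap (Matrix.toEuclideanLin M)‖

noncomputable def netOutput {n : ℕ} (d : ℕ → ℕ)
    (C : ∀ i : ℕ, Matrix (Fin (d (i+1))) (Fin (d i)) ℝ)
    (σ : ∀ i : ℕ, Matrix (Fin (d (i+1))) (Fin n) ℝ → Matrix (Fin (d (i+1))) (Fin n) ℝ)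
    (X : Matrix (Fin (d 0)) (Fin n) ℝ) : (ℓ : ℕ) → Matrix (Fin (d ℓ)) (Fin n) ℝ
  | 0 => X
  | (ℓ+1) => σ ℓ (C ℓ * netOutput d C σ X ℓ)

open Matrix Metric Set MeasureTheory
open scoped ENNReal

section Aux

/-- identification of matrices with Euclidean space -/
noncomputable def toE {p q : ℕ} : Matrix (Fin p) (Fin q) ℝ ≃ₗ[ℝ] EuclideanSpace ℝ (Fin p × Fin q) :=
  (LinearEquiv.curry ℝ ℝ (Fin p) (Fin q)).symm ≪≫ₗ (WithLp.linearEquiv 2 ℝ _).symm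

lemma frobNorm_eq_norm {p q : ℕ} (M : Matrix (Fin p) (Fin q) ℝ) : frobNorm M = ‖toE M‖ := by
  rw [EuclideanSpace.norm_eq, frobNorm]
  congr 1
  rw [Fintype.sum_prod_type]
  congr 1; ext i; congr 1; ext j
  simp [toE, Real.norm_eq_abs, sq_abs]
  rfl

lemma frobNorm_nonneg {p q : ℕ} (M : Matrix (Fin p) (Fin q) ℝ) : 0 ≤ frobNorm M :=
  Real.sqrt_nonneg _

lemma frobNorm_zero {p q : ℕ} : frobNorm (0 : Matrix (Fin p) (Fin q) ℝ) = 0 := by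
  rw [frobNorm_eq_norm, map_zero, norm_zero]

lemma frobNorm_eq_zero {p q : ℕ} {M : Matrix (Fin p) (Fin q) ℝ} (h : frobNorm M = 0) : M = 0 := by
  rw [frobNorm_eq_norm, norm_eq_zero] at h
  exact (LinearEquiv.map_eq_zero_iff toE).mp h

lemma frobNorm_add_le {p q : ℕ} (M N : Matrix (Fin p) (Fin q) ℝ) :
    frobNorm (M + N) ≤ frobNorm M + frobNorm N := by
  rw [frobNorm_eq_norm, frobNorm_eq_norm, frobNorm_eq_norm, map_add]
  exact norm_add_le _ _

lemma mulVec_bound {p q : ℕ} (M : Matrix (Fin p) (Fin q) ℝ) (v : Fin q → ℝ) :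
    Real.sqrt (∑ i, (M.mulVec v i) ^ 2) ≤ specNorm M * Real.sqrt (∑ j, (v j) ^ 2) := by
  have h := (LinearMap.toContinuousLinearMap (Matrix.toEuclideanLin M)).le_opNorm
    ((WithLp.equiv 2 _).symm v)
  simp only [LinearMap.coe_toContinuousLinearMap'] at h
  have he : Matrix.toEuclideanLin M ((WithLp.equiv 2 _).symm v)
      = (WithLp.equiv 2 _).symm (M *ᵥ v) := by
    simp [Matrix.toEuclideanLin]
  rw [he] at h
  rw [EuclideanSpace.norm_eq, EuclideanSpace.norm_eq] at h
  simpa [specNorm, Real.norm_eq_abs, sq_abs] using h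

lemma frob_spec_mul {p q k : ℕ} (M : Matrix (Fin p) (Fin q) ℝ) (N : Matrix (Fin q) (Fin k) ℝ) :
    frobNorm (M * N) ≤ specNorm M * frobNorm N := by
  have hs : 0 ≤ specNorm M := norm_nonneg _
  have hcol : ∀ j, ∑ i, ((M * N) i j) ^ 2 ≤ (specNorm M)^2 * ∑ l, (N l j) ^ 2 := by
    intro j
    have h := mulVec_bound M (fun l => N l j)
    have h2 := mul_self_le_mul_self (Real.sqrt_nonneg _) h
    rw [Real.mul_self_sqrt (by positivity)] at h2
    have h3 : (specNorm M * Real.sqrt (∑ l, (N l j) ^ 2)) * (specNorm M * Real.sqrt (∑ l, (N l j) ^ 2))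
        = (specNorm M)^2 * ∑ l, (N l j) ^ 2 := by
      have := Real.mul_self_sqrt (show (0:ℝ) ≤ ∑ l, (N l j) ^ 2 by positivity)
      nlinarith [this]
    rw [h3] at h2
    have hmv : ∀ i, (M *ᵥ (fun l => N l j)) i = (M * N) i j := by
      intro i; simp [Matrix.mul_apply, Matrix.mulVec, dotProduct]
    calc ∑ i, ((M * N) i j) ^ 2 = ∑ i, ((M *ᵥ (fun l => N l j)) i) ^ 2 := by
          refine Finset.sum_congr rfl fun i _ => by rw [hmv]
      _ ≤ (specNorm M)^2 * ∑ l, (N l j) ^ 2 := h2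
  rw [frobNorm, frobNorm, Finset.sum_comm]
  calc Real.sqrt (∑ j, ∑ i, ((M * N) i j) ^ 2)
      ≤ Real.sqrt (∑ j, (specNorm M)^2 * ∑ l, (N l j) ^ 2) :=
        Real.sqrt_le_sqrt (Finset.sum_le_sum fun j _ => hcol j)
    _ = specNorm M * Real.sqrt (∑ l, ∑ j, (N l j) ^ 2) := by
        rw [← Finset.mul_sum, Real.sqrt_mul (by positivity), Real.sqrt_sq hs, Finset.sum_comm]

lemma frob_frob_mul {p q k : ℕ} (M : Matrix (Fin p) (Fin q) ℝ) (N : Matrix (Fin q) (Fin k) ℝ) :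
    frobNorm (M * N) ≤ frobNorm M * frobNorm N := by
  have h1 : ∀ i j, ((M * N) i j)^2 ≤ (∑ l, (M i l)^2) * (∑ l, (N l j)^2) := by
    intro i j
    rw [Matrix.mul_apply]
    exact Finset.sum_mul_sq_le_sq_mul_sq _ _ _
  have h2 : ∑ i, ∑ j, ((M * N) i j)^2 ≤ (∑ i, ∑ l, (M i l)^2) * (∑ l, ∑ j, (N l j)^2) := by
    calc ∑ i, ∑ j, ((M * N) i j)^2 ≤ ∑ i, ∑ j, (∑ l, (M i l)^2) * (∑ l, (N l j)^2) :=
          Finset.sum_le_sum fun i _ => Finset.sum_le_sum fun j _ => h1 i j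
      _ = (∑ i, ∑ l, (M i l)^2) * (∑ l, ∑ j, (N l j)^2) := by
          rw [Finset.sum_mul]
          refine Finset.sum_congr rfl fun i _ => ?_
          rw [← Finset.mul_sum]
          congr 1
          exact Finset.sum_comm
  rw [frobNorm, frobNorm, frobNorm, ← Real.sqrt_mul (by positivity)]
  exact Real.sqrt_le_sqrt h2

end Aux


section Cover

lemma sep_count {E : Type*} [NormedAddCommGroup E] [NormedSpace ℝ E] [FiniteDimensional ℝ E]
    [MeasurableSpace E] [BorelSpace E] (μ : Measure E) [μ.IsAddHaarMeasure]
    (r δ : ℝ) (hδ : 0 < δ) (hr : 0 ≤ r)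
    (S : Finset E) (hSK : ∀ y ∈ S, y ∈ closedBall (0:E) r)
    (hsep : (S : Set E).Pairwise fun x y => δ < dist x y) :
    (S.card : ℝ) ≤ (1 + 2*r/δ) ^ (Module.finrank ℝ E) := by
  classical
  set m := Module.finrank ℝ E with hm
  have hc0 : μ (closedBall (0:E) 1) ≠ 0 :=
    ((measure_ball_pos μ (0:E) one_pos).trans_le (measure_mono ball_subset_closedBall)).ne'
  have hctop : μ (closedBall (0:E) 1) ≠ ⊤ := measure_closedBall_lt_top.ne
  have hdisj : (S : Set E).PairwiseDisjoint (fun y => closedBall y (δ/2)) := by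
    intro x hx y hy hxy
    apply closedBall_disjoint_closedBall
    have := hsep hx hy hxy
    linarith
  have hsum : ∑ y ∈ S, μ (closedBall y (δ/2)) = μ (⋃ y ∈ S, closedBall y (δ/2)) :=
    (measure_biUnion_finset hdisj (fun y _ => measurableSet_closedBall)).symm
  have hsub : (⋃ y ∈ S, closedBall y (δ/2)) ⊆ closedBall (0:E) (r + δ/2) := by
    intro z hz
    simp only [mem_iUnion] at hz
    obtain ⟨y, hy, hz⟩ := hz
    have hyK := hSK y hy
    rw [mem_closedBall] at *
    calc dist z 0 ≤ dist z y + dist y 0 := dist_triangle _ _ _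
      _ ≤ δ/2 + r := add_le_add hz hyK
      _ = r + δ/2 := by ring
  have hval : ∀ y : E, μ (closedBall y (δ/2)) =
      ENNReal.ofReal ((δ/2) ^ m) * μ (closedBall (0:E) 1) := fun y =>
    Measure.addHaar_closedBall' μ y (by linarith)
  have hineq : (S.card : ℝ≥0∞) * ENNReal.ofReal ((δ/2) ^ m) * μ (closedBall (0:E) 1) ≤
      ENNReal.ofReal ((r + δ/2) ^ m) * μ (closedBall (0:E) 1) := by
    rw [← Measure.addHaar_closedBall' μ 0 (by linarith : (0:ℝ) ≤ r + δ/2)]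
    calc (S.card : ℝ≥0∞) * ENNReal.ofReal ((δ/2) ^ m) * μ (closedBall (0:E) 1)
        = ∑ y ∈ S, μ (closedBall y (δ/2)) := by
          rw [Finset.sum_congr rfl (fun y _ => hval y), Finset.sum_const, nsmul_eq_mul, mul_assoc]
      _ = μ (⋃ y ∈ S, closedBall y (δ/2)) := hsum
      _ ≤ μ (closedBall (0:E) (r + δ/2)) := measure_mono hsub
  have hineq2 : (S.card : ℝ≥0∞) * ENNReal.ofReal ((δ/2) ^ m) ≤
      ENNReal.ofReal ((r + δ/2) ^ m) :=
    (ENNReal.mul_le_mul_iff_left hc0 hctop).mp hineq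
  have hpow : (0:ℝ) < (δ/2) ^ m := pow_pos (by linarith) m
  have hcast : ((S.card : ℝ≥0∞) * ENNReal.ofReal ((δ/2) ^ m)) =
      ENNReal.ofReal (S.card * (δ/2) ^ m) := by
    rw [ENNReal.ofReal_mul (by positivity), ENNReal.ofReal_natCast]
  rw [hcast, ENNReal.ofReal_le_ofReal_iff (by positivity)] at hineq2
  have h3 : (S.card : ℝ) ≤ (r + δ/2) ^ m / (δ/2) ^ m := by
    rw [le_div_iff₀ hpow]; exact hineq2
  calc (S.card : ℝ) ≤ (r + δ/2) ^ m / (δ/2) ^ m := h3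
    _ = ((r + δ/2) / (δ/2)) ^ m := (div_pow _ _ _).symm
    _ = (1 + 2*r/δ) ^ m := by
        congr 1
        field_simp
        ring

lemma exists_cover {E : Type*} [NormedAddCommGroup E] [NormedSpace ℝ E] [FiniteDimensional ℝ E]
    [MeasurableSpace E] [BorelSpace E] (μ : Measure E) [μ.IsAddHaarMeasure]
    (K : Set E) (r δ : ℝ) (hδ : 0 < δ) (hr : 0 ≤ r) (hK : K ⊆ closedBall 0 r)
    (hsepcount : ∀ S : Finset E, (∀ y ∈ S, y ∈ closedBall (0:E) r) →
      ((S : Set E).Pairwise fun x y => δ < dist x y) →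
      (S.card : ℝ) ≤ (1 + 2*r/δ) ^ (Module.finrank ℝ E)) :
    ∃ T : Finset E, ↑T ⊆ K ∧
      (T.card : ℝ) ≤ (1 + 2*r/δ) ^ (Module.finrank ℝ E) ∧
      ∀ x ∈ K, ∃ y ∈ T, dist x y ≤ δ := by
  classical
  -- maximal separated subset via Zorn
  obtain ⟨T₀, hT₀mem, hT₀max⟩ := zorn_subset
      {T : Set E | T ⊆ K ∧ T.Pairwise fun x y => δ < dist x y} (by
    intro c hc hchain
    refine ⟨⋃₀ c, ⟨?_, ?_⟩, fun t ht => subset_sUnion_of_mem ht⟩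
    · exact sUnion_subset fun t ht => (hc ht).1
    · intro x hx y hy hxy
      obtain ⟨tx, htx, hxt⟩ := hx
      obtain ⟨ty, hty, hyt⟩ := hy
      rcases hchain.total htx hty with h | h
      · exact (hc hty).2 (h hxt) hyt hxy
      · exact (hc htx).2 hxt (h hyt) hxy)
  obtain ⟨hT₀K, hT₀sep⟩ := hT₀mem
  -- T₀ is finite
  have hfin : T₀.Finite := by
    by_contra hinf
    have hinf' : T₀.Infinite := hinf
    obtain ⟨S, hSsub, hScard⟩ := hinf'.exists_subset_card_eq
      (Nat.floor ((1 + 2*r/δ) ^ (Module.finrank ℝ E)) + 1)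
    have hb := hsepcount S (fun y hy => hK (hT₀K (hSsub hy))) (hT₀sep.mono hSsub)
    rw [hScard] at hb
    have : ((1 + 2*r/δ) ^ (Module.finrank ℝ E)) < (Nat.floor ((1 + 2*r/δ) ^ (Module.finrank ℝ E)) + 1 : ℝ) := by
      push_cast
      exact Nat.lt_floor_add_one _
    push_cast at hb
    linarith
  refine ⟨hfin.toFinset, by simpa using hT₀K, ?_, ?_⟩
  · have := hsepcount hfin.toFinset (by simpa using fun y hy => hK (hT₀K hy))
      (by rw [hfin.coe_toFinset]; exact hT₀sep)
    simpa using this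
  · intro x hx
    by_contra hno
    push_neg at hno
    have hins : insert x T₀ ∈ {T : Set E | T ⊆ K ∧ T.Pairwise fun x y => δ < dist x y} := by
      constructor
      · exact insert_subset hx hT₀K
      · apply hT₀sep.insert
        intro y hy hxy
        have h1 : δ < dist x y := by
          have := hno y (by simpa using hy)
          linarith [this]
        exact ⟨h1, by rwa [dist_comm]⟩
    have hxT₀ : x ∈ T₀ := hT₀max hins (subset_insert x T₀) (mem_insert x T₀)
    have hd := hno x (by simpa using hxT₀)
    rw [dist_self] at hd
    linarith

lemma log_one_add_sq_le {t : ℝ} (ht : 0 ≤ t) : Real.log (1 + t^2) ≤ t := by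
  have h1 : (1 : ℝ) + t^2 ≤ Real.exp t := by
    have h2 := Real.sum_le_exp_of_nonneg ht 4
    have h3 : ∑ i ∈ Finset.range 4, t ^ i / (Nat.factorial i) = 1 + t + t^2/2 + t^3/6 := by
      norm_num [Finset.sum_range_succ, Nat.factorial]
      try ring
    rw [h3] at h2
    nlinarith [sq_nonneg (t - 3), pow_nonneg ht 3]
  calc Real.log (1 + t^2) ≤ Real.log (Real.exp t) :=
        Real.log_le_log (by positivity) h1
    _ = t := Real.log_exp t

lemma log_one_add_le_sqrt {x : ℝ} (hx : 0 ≤ x) : Real.log (1 + x) ≤ Real.sqrt x := by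
  have := log_one_add_sq_le (Real.sqrt_nonneg x)
  rwa [Real.sq_sqrt hx] at this

end Cover

section MatrixCover

lemma matrix_cover (p q : ℕ) (av sv δ : ℝ) (hav : 0 ≤ av) (hδ : 0 < δ) :
    ∃ T : Finset (Matrix (Fin p) (Fin q) ℝ),
      (∀ B ∈ T, frobNorm B ≤ av ∧ specNorm B ≤ sv) ∧
      (T.card : ℝ) ≤ (1 + 2*av/δ) ^ (p*q) ∧
      ∀ A : Matrix (Fin p) (Fin q) ℝ, frobNorm A ≤ av → specNorm A ≤ sv →
        ∃ B ∈ T, frobNorm (A - B) ≤ δ := by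
  classical
  set K : Set (EuclideanSpace ℝ (Fin p × Fin q)) :=
    toE '' {B | frobNorm B ≤ av ∧ specNorm B ≤ sv} with hKdef
  have hK : K ⊆ closedBall 0 av := by
    rintro x ⟨B, ⟨hB1, _⟩, rfl⟩
    rw [mem_closedBall, dist_zero_right, ← frobNorm_eq_norm]
    exact hB1
  have hrank : Module.finrank ℝ (EuclideanSpace ℝ (Fin p × Fin q)) = p * q := by
    rw [finrank_euclideanSpace]; simp
  obtain ⟨T, hTK, hTcard, hTcov⟩ := exists_cover (volume : Measure (EuclideanSpace ℝ (Fin p × Fin q)))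
    K av δ hδ hav hK (fun S hS hsep => sep_count volume av δ hδ hav S hS hsep)
  refine ⟨T.image toE.symm, ?_, ?_, ?_⟩
  · intro B hB
    rw [Finset.mem_image] at hB
    obtain ⟨y, hy, rfl⟩ := hB
    obtain ⟨B₀, hB₀, rfl⟩ := hTK hy
    simpa using hB₀
  · calc ((T.image toE.symm).card : ℝ) ≤ (T.card : ℝ) := by
          exact_mod_cast Finset.card_image_le
      _ ≤ (1 + 2*av/δ) ^ (p*q) := by rw [← hrank]; exact hTcard
  · intro A hA1 hA2
    obtain ⟨y, hy, hd⟩ := hTcov (toE A) ⟨A, ⟨hA1, hA2⟩, rfl⟩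
    refine ⟨toE.symm y, Finset.mem_image_of_mem _ hy, ?_⟩
    rw [frobNorm_eq_norm, map_sub, LinearEquiv.apply_symm_apply, ← dist_eq_norm]
    exact hd

end MatrixCover

noncomputable def netV (n : ℕ) (d : ℕ → ℕ)
    (σ : ∀ i : ℕ, Matrix (Fin (d (i+1))) (Fin n) ℝ → Matrix (Fin (d (i+1))) (Fin n) ℝ)
    (X : Matrix (Fin (d 0)) (Fin n) ℝ)
    (T : ∀ i : ℕ, Finset (Matrix (Fin (d (i+1))) (Fin (d i)) ℝ)) :
    (ℓ : ℕ) → Finset (Matrix (Fin (d ℓ)) (Fin n) ℝ)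
  | 0 => {X}
  | (ℓ+1) => Finset.image
      (fun uB : Matrix (Fin (d ℓ)) (Fin n) ℝ × Matrix (Fin (d (ℓ+1))) (Fin (d ℓ)) ℝ =>
        σ ℓ (uB.2 * uB.1)) ((netV n d σ X T ℓ) ×ˢ (T ℓ))

lemma netV_card (n : ℕ) (d : ℕ → ℕ)
    (σ : ∀ i : ℕ, Matrix (Fin (d (i+1))) (Fin n) ℝ → Matrix (Fin (d (i+1))) (Fin n) ℝ)
    (X : Matrix (Fin (d 0)) (Fin n) ℝ)
    (T : ∀ i : ℕ, Finset (Matrix (Fin (d (i+1))) (Fin (d i)) ℝ)) (ℓ : ℕ) :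
    (netV n d σ X T ℓ).card ≤ ∏ i ∈ Finset.range ℓ, (T i).card := by
  induction ℓ with
  | zero => simp [netV]
  | succ ℓ ih =>
    rw [Finset.prod_range_succ]
    calc (netV n d σ X T (ℓ+1)).card
        ≤ ((netV n d σ X T ℓ) ×ˢ (T ℓ)).card := Finset.card_image_le
      _ = (netV n d σ X T ℓ).card * (T ℓ).card := Finset.card_product _ _
      _ ≤ (∏ i ∈ Finset.range ℓ, (T i).card) * (T ℓ).card :=
          Nat.mul_le_mul_right _ ih

theorem covering_number_fnn (L n : ℕ) (d : ℕ → ℕ)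
    (X : Matrix (Fin (d 0)) (Fin n) ℝ)
    (σ : ∀ i : ℕ, Matrix (Fin (d (i+1))) (Fin n) ℝ → Matrix (Fin (d (i+1))) (Fin n) ℝ)
    (ρ s a : ℕ → ℝ)
    (hρ : ∀ i < L, 0 ≤ ρ i) (hs : ∀ i < L, 0 < s i) (ha : ∀ i < L, 0 < a i)
    (hσ : ∀ i < L, ∀ A B : Matrix (Fin (d (i+1))) (Fin n) ℝ,
      frobNorm (σ i A - σ i B) ≤ ρ i * frobNorm (A - B))
    (hσ0 : ∀ i < L, σ i 0 = 0) :
    ∀ ε > (0 : ℝ), ∃ U : Finset (Matrix (Fin (d L)) (Fin n) ℝ),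
      Real.log U.card ≤ Real.sqrt (frobNorm X *
        ((2 * ∏ i ∈ Finset.range L, ρ i * s i) *
          (∑ i ∈ Finset.range L, (d (i+1) : ℝ) ^ 2 * (d i : ℝ) ^ 2 * a i / s i) *
          (L : ℝ) ^ 2) / ε) ∧
      ∀ A : ∀ i : ℕ, Matrix (Fin (d (i+1))) (Fin (d i)) ℝ,
        (∀ i < L, frobNorm (A i) ≤ a i ∧ specNorm (A i) ≤ s i) →
        ∃ u ∈ U, frobNorm (netOutput d A σ X L - u) ≤ ε := by
  intro ε hε
  classical
  have hRHS : 0 ≤ Real.sqrt (frobNorm X *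
      ((2 * ∏ i ∈ Finset.range L, ρ i * s i) *
        (∑ i ∈ Finset.range L, (d (i+1) : ℝ) ^ 2 * (d i : ℝ) ^ 2 * a i / s i) *
        (L : ℝ) ^ 2) / ε) := Real.sqrt_nonneg _
  by_cases hL0 : L = 0
  · subst hL0
    refine ⟨{X}, by simpa using hRHS, ?_⟩
    intro A hA
    refine ⟨X, Finset.mem_singleton_self X, ?_⟩
    have : netOutput d A σ X 0 = X := rfl
    rw [this, sub_self, frobNorm_zero]
    exact hε.le
  have hL : 0 < L := Nat.pos_of_ne_zero hL0
  by_cases hdeg : frobNorm X = 0 ∨ ∃ i, i < L ∧ ρ i = 0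
  · -- degenerate: all outputs are zero
    have hzero : ∀ A : (∀ i : ℕ, Matrix (Fin (d (i+1))) (Fin (d i)) ℝ),
        netOutput d A σ X L = 0 := by
      intro A
      obtain ⟨ℓ₀, hℓ₀L, h0⟩ : ∃ ℓ₀, ℓ₀ ≤ L ∧ netOutput d A σ X ℓ₀ = 0 := by
        rcases hdeg with hX | ⟨i₀, hi₀, hρ0⟩
        · refine ⟨1, hL, ?_⟩
          have hX0 : X = 0 := frobNorm_eq_zero hX
          show σ 0 (A 0 * netOutput d A σ X 0) = 0
          have h00 : netOutput d A σ X 0 = X := rfl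
          rw [h00, hX0, Matrix.mul_zero]
          exact hσ0 0 hL
        · refine ⟨i₀+1, hi₀, ?_⟩
          have hconst : ∀ M, σ i₀ M = 0 := by
            intro M
            have h1 := hσ i₀ hi₀ M 0
            rw [hσ0 i₀ hi₀, hρ0, zero_mul, sub_zero] at h1
            exact frobNorm_eq_zero (le_antisymm h1 (frobNorm_nonneg _))
          exact hconst _
      have hprop : ∀ ℓ, ℓ ≤ L → ℓ₀ ≤ ℓ → netOutput d A σ X ℓ = 0 := by
        intro ℓ
        induction ℓ with
        | zero =>
          intro _ h
          have hz : ℓ₀ = 0 := by omega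
          subst hz; exact h0
        | succ ℓ ih =>
          intro hℓL hℓ₀
          by_cases hc : ℓ₀ = ℓ + 1
          · subst hc; exact h0
          · have hℓ : ℓ < L := by omega
            show σ ℓ (A ℓ * netOutput d A σ X ℓ) = 0
            rw [ih (by omega) (by omega), Matrix.mul_zero]
            exact hσ0 ℓ hℓ
      exact hprop L le_rfl hℓ₀L
    refine ⟨{0}, by simpa using hRHS, ?_⟩
    intro A hA
    refine ⟨0, Finset.mem_singleton_self 0, ?_⟩
    rw [hzero A, sub_self, frobNorm_zero]
    exact hε.le
  -- main case
  push_neg at hdeg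
  obtain ⟨hX0, hρ0'⟩ := hdeg
  have hW : 0 < frobNorm X := lt_of_le_of_ne (frobNorm_nonneg X) (Ne.symm hX0)
  have hρpos : ∀ i, i < L → 0 < ρ i := fun i hi =>
    lt_of_le_of_ne (hρ i hi) (Ne.symm (hρ0' i hi))
  set W := frobNorm X with hWdef
  set P := ∏ i ∈ Finset.range L, ρ i * s i with hPdef
  have hPpos : 0 < P := Finset.prod_pos fun i hi =>
    mul_pos (hρpos i (Finset.mem_range.mp hi)) (hs i (Finset.mem_range.mp hi))
  set δf : ℕ → ℝ := fun i => ε * s i / ((L:ℝ) * P * W) with hδdef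
  have hLpos : (0:ℝ) < (L:ℝ) := by exact_mod_cast hL
  have hδpos : ∀ i, i < L → 0 < δf i := by
    intro i hi
    rw [hδdef]
    exact div_pos (mul_pos hε (hs i hi)) (by positivity)
  -- per layer covers
  have hTex : ∀ i : ℕ, ∃ T : Finset (Matrix (Fin (d (i+1))) (Fin (d i)) ℝ),
      i < L → ((∀ B ∈ T, frobNorm B ≤ a i ∧ specNorm B ≤ s i) ∧
        (T.card : ℝ) ≤ (1 + 2*(a i)/(δf i)) ^ (d (i+1) * d i) ∧
        ∀ A : Matrix (Fin (d (i+1))) (Fin (d i)) ℝ, frobNorm A ≤ a i → specNorm A ≤ s i →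
          ∃ B ∈ T, frobNorm (A - B) ≤ δf i) := by
    intro i
    by_cases hi : i < L
    · obtain ⟨T, h1, h2, h3⟩ :=
        matrix_cover (d (i+1)) (d i) (a i) (s i) (δf i) (ha i hi).le (hδpos i hi)
      exact ⟨T, fun _ => ⟨h1, h2, h3⟩⟩
    · exact ⟨∅, fun h => absurd h hi⟩
  choose T hT using hTex
  refine ⟨netV n d σ X T L, ?_, ?_⟩
  · -- log-cardinality bound
    set U := netV n d σ X T L with hUdef
    set g : ℕ → ℝ := fun i => (d (i+1) : ℝ) ^ 2 * (d i : ℝ) ^ 2 * a i / s i with hgdef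
    have hgnn : ∀ i ∈ Finset.range L, 0 ≤ g i := by
      intro i hi
      have hiL := Finset.mem_range.mp hi
      have := (ha i hiL).le
      have := (hs i hiL).le
      simp only [hgdef]
      positivity
    by_cases hU0 : U.card = 0
    · rw [hU0]
      simpa using hRHS
    have hU1 : 1 ≤ U.card := Nat.one_le_iff_ne_zero.mpr hU0
    have hcard := netV_card n d σ X T L
    have hfac : ∀ i ∈ Finset.range L, (0:ℝ) < 1 + 2*(a i)/(δf i) := by
      intro i hi
      have hiL := Finset.mem_range.mp hi
      have h1 := (ha i hiL).le
      have h2 := (hδpos i hiL)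
      positivity
    have hstep1 : (U.card : ℝ) ≤
        ∏ i ∈ Finset.range L, ((1 + 2*(a i)/(δf i)) ^ (d (i+1) * d i)) := by
      calc (U.card:ℝ) ≤ ((∏ i ∈ Finset.range L, (T i).card : ℕ) : ℝ) := by exact_mod_cast hcard
        _ = ∏ i ∈ Finset.range L, ((T i).card : ℝ) := by push_cast; rfl
        _ ≤ ∏ i ∈ Finset.range L, ((1 + 2*(a i)/(δf i)) ^ (d (i+1) * d i)) :=
            Finset.prod_le_prod (fun i _ => by positivity)
              (fun i hi => (hT i (Finset.mem_range.mp hi)).2.1)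
    have hlog1 : Real.log U.card ≤
        Real.log (∏ i ∈ Finset.range L, ((1 + 2*(a i)/(δf i)) ^ (d (i+1) * d i))) :=
      Real.log_le_log (by exact_mod_cast hU1) hstep1
    have hlog2 : Real.log (∏ i ∈ Finset.range L, ((1 + 2*(a i)/(δf i)) ^ (d (i+1) * d i))) =
        ∑ i ∈ Finset.range L, ((d (i+1) * d i : ℕ) : ℝ) * Real.log (1 + 2*(a i)/(δf i)) := by
      rw [Real.log_prod (fun i hi => (pow_pos (hfac i hi) _).ne')]
      exact Finset.sum_congr rfl fun i hi => Real.log_pow _ _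
    have hlog3 : ∑ i ∈ Finset.range L, ((d (i+1) * d i : ℕ) : ℝ) * Real.log (1 + 2*(a i)/(δf i)) ≤
        ∑ i ∈ Finset.range L, ((d (i+1) * d i : ℕ) : ℝ) * Real.sqrt (2*(a i)/(δf i)) := by
      refine Finset.sum_le_sum fun i hi => ?_
      have hiL := Finset.mem_range.mp hi
      refine mul_le_mul_of_nonneg_left ?_ (Nat.cast_nonneg _)
      have hnn : 0 ≤ 2*(a i)/(δf i) := by
        have h1 := (ha i hiL).le
        have h2 := hδpos i hiL
        positivity
      exact log_one_add_le_sqrt hnn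
    have hsq : ∀ i ∈ Finset.range L, Real.sqrt (2*(a i)/(δf i)) =
        Real.sqrt (2*(L:ℝ)*P*W/ε) * Real.sqrt ((a i)/(s i)) := by
      intro i hi
      have hiL := Finset.mem_range.mp hi
      rw [← Real.sqrt_mul (by positivity : (0:ℝ) ≤ 2*(L:ℝ)*P*W/ε)]
      congr 1
      simp only [hδdef]
      have h1 := (hs i hiL).ne'
      field_simp
    have hlog4 : ∑ i ∈ Finset.range L, ((d (i+1) * d i : ℕ) : ℝ) * Real.sqrt (2*(a i)/(δf i)) =
        Real.sqrt (2*(L:ℝ)*P*W/ε) *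
          ∑ i ∈ Finset.range L, ((d (i+1) * d i : ℕ) : ℝ) * Real.sqrt ((a i)/(s i)) := by
      rw [Finset.mul_sum]
      refine Finset.sum_congr rfl fun i hi => ?_
      rw [hsq i hi]
      ring
    have hCS : (∑ i ∈ Finset.range L, ((d (i+1) * d i : ℕ) : ℝ) * Real.sqrt ((a i)/(s i)))^2 ≤
        (L:ℝ) * ∑ i ∈ Finset.range L, g i := by
      have h := Finset.sum_sq_le_sum_mul_sum_of_sq_eq_mul (Finset.range L)
        (f := fun _ => (1:ℝ)) (g := g)
        (r := fun i => ((d (i+1) * d i : ℕ) : ℝ) * Real.sqrt ((a i)/(s i)))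
        (fun i _ => zero_le_one) hgnn ?_
      · calc (∑ i ∈ Finset.range L, ((d (i+1) * d i : ℕ) : ℝ) * Real.sqrt ((a i)/(s i)))^2
            ≤ (∑ _i ∈ Finset.range L, (1:ℝ)) * ∑ i ∈ Finset.range L, g i := h
          _ = (L:ℝ) * ∑ i ∈ Finset.range L, g i := by
              rw [Finset.sum_const, Finset.card_range, nsmul_eq_mul, mul_one]
      · intro i hi
        have hiL := Finset.mem_range.mp hi
        have hnn : (0:ℝ) ≤ (a i)/(s i) := div_nonneg (ha i hiL).le (hs i hiL).le
        rw [mul_pow, Real.sq_sqrt hnn, one_mul]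
        simp only [hgdef]
        push_cast
        ring
    have hsum_nn : 0 ≤ ∑ i ∈ Finset.range L, ((d (i+1) * d i : ℕ) : ℝ) * Real.sqrt ((a i)/(s i)) :=
      Finset.sum_nonneg fun i _ => mul_nonneg (Nat.cast_nonneg _) (Real.sqrt_nonneg _)
    have hCS' : ∑ i ∈ Finset.range L, ((d (i+1) * d i : ℕ) : ℝ) * Real.sqrt ((a i)/(s i)) ≤
        Real.sqrt ((L:ℝ) * ∑ i ∈ Finset.range L, g i) := by
      rw [← Real.sqrt_sq hsum_nn]
      exact Real.sqrt_le_sqrt hCS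
    calc Real.log U.card
        ≤ ∑ i ∈ Finset.range L, ((d (i+1) * d i : ℕ) : ℝ) * Real.sqrt (2*(a i)/(δf i)) :=
          (hlog1.trans (le_of_eq hlog2)).trans hlog3
      _ = Real.sqrt (2*(L:ℝ)*P*W/ε) *
            ∑ i ∈ Finset.range L, ((d (i+1) * d i : ℕ) : ℝ) * Real.sqrt ((a i)/(s i)) := hlog4
      _ ≤ Real.sqrt (2*(L:ℝ)*P*W/ε) * Real.sqrt ((L:ℝ) * ∑ i ∈ Finset.range L, g i) :=
          mul_le_mul_of_nonneg_left hCS' (Real.sqrt_nonneg _)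
      _ = Real.sqrt ((2*(L:ℝ)*P*W/ε) * ((L:ℝ) * ∑ i ∈ Finset.range L, g i)) :=
          (Real.sqrt_mul (by positivity) _).symm
      _ = Real.sqrt (W * ((2 * P) * (∑ i ∈ Finset.range L, g i) * (L:ℝ)^2) / ε) := by
          congr 1
          ring

  · -- covering property
    intro A hA
    have hnorm : ∀ ℓ, ℓ ≤ L →
        frobNorm (netOutput d A σ X ℓ) ≤ (∏ j ∈ Finset.range ℓ, ρ j * s j) * W := by
      intro ℓ
      induction ℓ with
      | zero => intro _; simp only [Finset.range_zero, Finset.prod_empty, one_mul]; exact le_of_eq rfl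
      | succ ℓ ih =>
        intro hℓ1
        have hℓ : ℓ < L := hℓ1
        have hprev := ih (le_of_lt hℓ)
        have hstep : frobNorm (netOutput d A σ X (ℓ+1)) ≤
            ρ ℓ * frobNorm (A ℓ * netOutput d A σ X ℓ) := by
          have h1 := hσ ℓ hℓ (A ℓ * netOutput d A σ X ℓ) 0
          rw [hσ0 ℓ hℓ, sub_zero, sub_zero] at h1
          exact h1
        have h2 : frobNorm (A ℓ * netOutput d A σ X ℓ) ≤
            s ℓ * ((∏ j ∈ Finset.range ℓ, ρ j * s j) * W) := by
          calc frobNorm (A ℓ * netOutput d A σ X ℓ)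
              ≤ specNorm (A ℓ) * frobNorm (netOutput d A σ X ℓ) := frob_spec_mul _ _
            _ ≤ s ℓ * ((∏ j ∈ Finset.range ℓ, ρ j * s j) * W) :=
                mul_le_mul (hA ℓ hℓ).2 hprev (frobNorm_nonneg _) (hs ℓ hℓ).le
        calc frobNorm (netOutput d A σ X (ℓ+1))
            ≤ ρ ℓ * frobNorm (A ℓ * netOutput d A σ X ℓ) := hstep
          _ ≤ ρ ℓ * (s ℓ * ((∏ j ∈ Finset.range ℓ, ρ j * s j) * W)) :=
              mul_le_mul_of_nonneg_left h2 (hρ ℓ hℓ)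
          _ = (∏ j ∈ Finset.range (ℓ+1), ρ j * s j) * W := by
              rw [Finset.prod_range_succ]; ring
    set Efun : ℕ → ℝ := fun ℓ => ∑ i ∈ Finset.range ℓ,
      (∏ j ∈ Finset.Ico (i+1) ℓ, ρ j * s j) *
        (ρ i * δf i * ((∏ j ∈ Finset.range i, ρ j * s j) * W)) with hEdef
    have happrox : ∀ ℓ, ℓ ≤ L → ∃ u ∈ netV n d σ X T ℓ,
        frobNorm (netOutput d A σ X ℓ - u) ≤ Efun ℓ := by
      intro ℓ
      induction ℓ with
      | zero =>
        intro _
        refine ⟨X, ?_, ?_⟩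
        · show X ∈ ({X} : Finset _)
          exact Finset.mem_singleton_self X
        · have : netOutput d A σ X 0 = X := rfl
          rw [this, sub_self, frobNorm_zero, hEdef]
          simp
      | succ ℓ ih =>
        intro hℓ1
        have hℓ : ℓ < L := hℓ1
        obtain ⟨u, hu, hub⟩ := ih (le_of_lt hℓ)
        obtain ⟨B, hB, hABd⟩ := (hT ℓ hℓ).2.2 (A ℓ) (hA ℓ hℓ).1 (hA ℓ hℓ).2
        have hBs : specNorm B ≤ s ℓ := ((hT ℓ hℓ).1 B hB).2
        refine ⟨σ ℓ (B * u), ?_, ?_⟩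
        · show σ ℓ (B * u) ∈ Finset.image
            (fun uB : Matrix (Fin (d ℓ)) (Fin n) ℝ × Matrix (Fin (d (ℓ+1))) (Fin (d ℓ)) ℝ =>
              σ ℓ (uB.2 * uB.1)) ((netV n d σ X T ℓ) ×ˢ (T ℓ))
          exact Finset.mem_image.mpr ⟨(u, B), Finset.mem_product.mpr ⟨hu, hB⟩, rfl⟩
        · have hsplit : A ℓ * netOutput d A σ X ℓ - B * u =
              (A ℓ - B) * netOutput d A σ X ℓ + B * (netOutput d A σ X ℓ - u) := by
            rw [Matrix.sub_mul, Matrix.mul_sub]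
            abel
          have hkey : frobNorm (A ℓ * netOutput d A σ X ℓ - B * u) ≤
              δf ℓ * ((∏ j ∈ Finset.range ℓ, ρ j * s j) * W) + s ℓ * Efun ℓ := by
            rw [hsplit]
            calc frobNorm ((A ℓ - B) * netOutput d A σ X ℓ + B * (netOutput d A σ X ℓ - u))
                ≤ frobNorm ((A ℓ - B) * netOutput d A σ X ℓ)
                  + frobNorm (B * (netOutput d A σ X ℓ - u)) := frobNorm_add_le _ _
              _ ≤ δf ℓ * ((∏ j ∈ Finset.range ℓ, ρ j * s j) * W) + s ℓ * Efun ℓ := by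
                  gcongr ?_ + ?_
                  · calc frobNorm ((A ℓ - B) * netOutput d A σ X ℓ)
                        ≤ frobNorm (A ℓ - B) * frobNorm (netOutput d A σ X ℓ) :=
                          frob_frob_mul _ _
                      _ ≤ δf ℓ * ((∏ j ∈ Finset.range ℓ, ρ j * s j) * W) :=
                          mul_le_mul hABd (hnorm ℓ (le_of_lt hℓ)) (frobNorm_nonneg _)
                            (hδpos ℓ hℓ).le
                  · calc frobNorm (B * (netOutput d A σ X ℓ - u))
                        ≤ specNorm B * frobNorm (netOutput d A σ X ℓ - u) := frob_spec_mul _ _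
                      _ ≤ s ℓ * Efun ℓ :=
                          mul_le_mul hBs hub (frobNorm_nonneg _) (hs ℓ hℓ).le
          have hstep : frobNorm (netOutput d A σ X (ℓ+1) - σ ℓ (B * u)) ≤
              ρ ℓ * frobNorm (A ℓ * netOutput d A σ X ℓ - B * u) :=
            hσ ℓ hℓ (A ℓ * netOutput d A σ X ℓ) (B * u)
          have hErec : Efun (ℓ+1) =
              ρ ℓ * s ℓ * Efun ℓ + ρ ℓ * δf ℓ * ((∏ j ∈ Finset.range ℓ, ρ j * s j) * W) := by
            simp only [hEdef]
            have h1 : ∀ i ∈ Finset.range ℓ,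
                (∏ j ∈ Finset.Ico (i+1) (ℓ+1), ρ j * s j) *
                  (ρ i * δf i * ((∏ j ∈ Finset.range i, ρ j * s j) * W)) =
                (ρ ℓ * s ℓ) * ((∏ j ∈ Finset.Ico (i+1) ℓ, ρ j * s j) *
                  (ρ i * δf i * ((∏ j ∈ Finset.range i, ρ j * s j) * W))) := by
              intro i hi
              rw [Finset.prod_Ico_succ_top (Nat.succ_le_of_lt (Finset.mem_range.mp hi))]
              ring
            have h2 : ∑ i ∈ Finset.range ℓ,
                (∏ j ∈ Finset.Ico (i+1) (ℓ+1), ρ j * s j) *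
                  (ρ i * δf i * ((∏ j ∈ Finset.range i, ρ j * s j) * W)) =
                ρ ℓ * s ℓ * ∑ i ∈ Finset.range ℓ, (∏ j ∈ Finset.Ico (i+1) ℓ, ρ j * s j) *
                  (ρ i * δf i * ((∏ j ∈ Finset.range i, ρ j * s j) * W)) := by
              rw [Finset.mul_sum]
              exact Finset.sum_congr rfl h1
            rw [Finset.sum_range_succ, h2, Finset.Ico_self, Finset.prod_empty, one_mul]
            try ring
          calc frobNorm (netOutput d A σ X (ℓ+1) - σ ℓ (B * u))
              ≤ ρ ℓ * frobNorm (A ℓ * netOutput d A σ X ℓ - B * u) := hstep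
            _ ≤ ρ ℓ * (δf ℓ * ((∏ j ∈ Finset.range ℓ, ρ j * s j) * W) + s ℓ * Efun ℓ) :=
                mul_le_mul_of_nonneg_left hkey (hρ ℓ hℓ)
            _ = Efun (ℓ+1) := by rw [hErec]; ring
    obtain ⟨u, hu, hub⟩ := happrox L le_rfl
    have hEL : Efun L = ε := by
      simp only [hEdef]
      have hterm : ∀ i ∈ Finset.range L,
          (∏ j ∈ Finset.Ico (i+1) L, ρ j * s j) *
            (ρ i * δf i * ((∏ j ∈ Finset.range i, ρ j * s j) * W)) = ε / L := by
        intro i hi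
        have hiL := Finset.mem_range.mp hi
        have hsplit : (∏ j ∈ Finset.range i, ρ j * s j) * (ρ i * s i) *
            (∏ j ∈ Finset.Ico (i+1) L, ρ j * s j) = P := by
          rw [← Finset.prod_range_succ, hPdef]
          exact Finset.prod_range_mul_prod_Ico _ (Nat.succ_le_of_lt hiL)
        have hQpos : 0 < ∏ j ∈ Finset.Ico (i+1) L, ρ j * s j :=
          Finset.prod_pos fun j hj => mul_pos (hρpos j (Finset.mem_Ico.mp hj).2)
            (hs j (Finset.mem_Ico.mp hj).2)
        have hPipos : 0 < ∏ j ∈ Finset.range i, ρ j * s j :=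
          Finset.prod_pos fun j hj => mul_pos (hρpos j (lt_trans (Finset.mem_range.mp hj) hiL))
            (hs j (lt_trans (Finset.mem_range.mp hj) hiL))
        rw [hδdef]
        rw [← hsplit]
        have hρi := hρpos i hiL
        have hsi := hs i hiL
        field_simp
      rw [Finset.sum_congr rfl hterm, Finset.sum_const, Finset.card_range, nsmul_eq_mul]
      field_simp
    exact ⟨u, hu, hub.trans (le_of_eq hEL)⟩
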